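/- Let τ ∈ ℂ with Im τ > 0 and let q ∈ ℂ with q ∉ ℤ + τℤ. Suppose g : ℂ → ℂ is differentiable (as a map from ℝ² to ℂ), satisfies g(z + 1) = g(z) and g(z + τ) = g(z) for all z ∈ ℂ, and satisfies ∂g/∂z̄ = −π (Im τ)⁻¹ q g and ∂g/∂z = π (Im τ)⁻¹ q̄ g at every point of ℂ. Then g is identically zero. -/

import Mathlib

/-- Wirtinger derivative `∂f/∂z = ½(∂f/∂x − i ∂f/∂y)` of a map `f : ℂ → ℂ`,
viewed as a map `ℝ² → ℂ`, expressed through the real Fréchet derivative. -/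
noncomputable def wirtingerZ (f : ℂ → ℂ) (z : ℂ) : ℂ :=
  (1 / 2 : ℂ) * (fderiv ℝ f z 1 - Complex.I * fderiv ℝ f z Complex.I)

/-- Conjugate Wirtinger derivative `∂f/∂z̄ = ½(∂f/∂x + i ∂f/∂y)`. -/
noncomputable def wirtingerZBar (f : ℂ → ℂ) (z : ℂ) : ℂ :=
  (1 / 2 : ℂ) * (fderiv ℝ f z 1 + Complex.I * fderiv ℝ f z Complex.I)

/-- The flat line bundle on the elliptic curve `ℂ/(ℤ + τℤ)` determined by a
point `q` not in the lattice has no nonzero flat section: any doubly periodic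
differentiable `g : ℂ → ℂ` with `∂g/∂z̄ = −π (Im τ)⁻¹ q g` and
`∂g/∂z = π (Im τ)⁻¹ q̄ g` vanishes identically. -/
theorem flat_section_of_nontrivial_line_bundle_is_zero
    (τ : ℂ) (hτ : 0 < τ.im) (q : ℂ)
    (hq : ∀ m l : ℤ, q ≠ (m : ℂ) + (l : ℂ) * τ)
    (g : ℂ → ℂ) (hdiff : Differentiable ℝ g)
    (hper1 : ∀ z, g (z + 1) = g z)
    (hperτ : ∀ z, g (z + τ) = g z)
    (heq1 : ∀ z, wirtingerZBar g z = -((Real.pi : ℂ) * ((τ.im : ℂ))⁻¹) * q * g z)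
    (heq2 : ∀ z, wirtingerZ g z = ((Real.pi : ℂ) * ((τ.im : ℂ))⁻¹) * (starRingEnd ℂ q) * g z) :
    ∀ z, g z = 0 := by
  set t : ℂ := (τ.im : ℂ) with ht_def
  have ht : t ≠ 0 := by
    simp only [ht_def, ne_eq, Complex.ofReal_eq_zero]
    exact ne_of_gt hτ
  have hπ : (Real.pi : ℂ) ≠ 0 := by
    simpa using Real.pi_ne_zero
  set c₁ : ℂ := -((Real.pi : ℂ) * t⁻¹) * q with hc₁
  set c₂ : ℂ := ((Real.pi : ℂ) * t⁻¹) * (starRingEnd ℂ q) with hc₂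
  -- full real derivative of g
  have hd : ∀ z v, fderiv ℝ g z v = c₂ * g z * v + c₁ * g z * (starRingEnd ℂ v) := by
    intro z v
    have h1 := heq1 z
    have h2 := heq2 z
    unfold wirtingerZBar at h1
    unfold wirtingerZ at h2
    have hA : fderiv ℝ g z 1 = (c₂ + c₁) * g z := by linear_combination h1 + h2
    have hB : fderiv ℝ g z Complex.I = Complex.I * (c₂ - c₁) * g z := by
      linear_combination -Complex.I * h1 + Complex.I * h2 +
        (fderiv ℝ g z Complex.I) * Complex.I_sq
    have hv : v = v.re • (1 : ℂ) + v.im • Complex.I := by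
      simp [Complex.real_smul, Complex.re_add_im]
    have e2 : starRingEnd ℂ v = (v.re : ℂ) - (v.im : ℂ) * Complex.I := by
      have h3 := Complex.sub_conj v
      push_cast at h3
      linear_combination -Complex.re_add_im v - h3
    calc fderiv ℝ g z v = fderiv ℝ g z (v.re • (1 : ℂ) + v.im • Complex.I) := by rw [← hv]
      _ = v.re • fderiv ℝ g z 1 + v.im • fderiv ℝ g z Complex.I := by
          rw [map_add, map_smul, map_smul]
      _ = (v.re : ℂ) * ((c₂ + c₁) * g z) + (v.im : ℂ) * (Complex.I * (c₂ - c₁) * g z) := by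
          rw [hA, hB, Complex.real_smul, Complex.real_smul]
      _ = c₂ * g z * v + c₁ * g z * (starRingEnd ℂ v) := by
          have e1 : (v.re : ℂ) + (v.im : ℂ) * Complex.I = v := Complex.re_add_im v
          linear_combination (c₂ * g z) * e1 - (c₁ * g z) * e2
  -- the linear map v ↦ c₂ v + c₁ conj v
  set L : ℂ →L[ℝ] ℂ :=
    c₂ • (ContinuousLinearMap.id ℝ ℂ) + c₁ • (Complex.conjCLE : ℂ →L[ℝ] ℂ) with hL
  have hLapp : ∀ v, L v = c₂ * v + c₁ * (starRingEnd ℂ v) := by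
    intro v
    simp [hL, Complex.conjCLE_apply, smul_eq_mul]
  set ψ : ℂ → ℂ := fun z => c₂ * z + c₁ * (starRingEnd ℂ z) with hψ
  have hψeq : ψ = fun z => L z := by
    funext z; rw [hLapp]
  set h : ℂ → ℂ := fun z => g z * Complex.exp (-ψ z) with hh
  have hhas : ∀ x, HasFDerivAt h (0 : ℂ →L[ℝ] ℂ) x := by
    intro x
    have hg : HasFDerivAt g (fderiv ℝ g x) x := (hdiff x).hasFDerivAt
    have hψd : HasFDerivAt (fun z => -ψ z) (-L) x := by
      rw [hψeq]
      exact (L.hasFDerivAt).neg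
    have hexp : HasFDerivAt (fun z => Complex.exp (-ψ z))
        (Complex.exp (-ψ x) • (-L)) x :=
      (Complex.hasDerivAt_exp (-ψ x)).comp_hasFDerivAt x hψd
    have hmul := hg.mul hexp
    convert hmul using 1
    · rfl
    · rfl
    · rfl
    ext v
    simp only [ContinuousLinearMap.zero_apply, ContinuousLinearMap.add_apply,
      ContinuousLinearMap.smul_apply, ContinuousLinearMap.neg_apply, smul_eq_mul]
    rw [hd x v, hLapp v]
    ring
  have hconst : ∀ z, h z = h 0 :=
    fun z => is_const_of_fderiv_eq_zero (fun x => (hhas x).differentiableAt)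
      (fun x => (hhas x).fderiv) z 0
  have hψ0 : ψ 0 = 0 := by simp [hψ]
  -- hence g z = g 0 * exp (ψ z)
  have hgz : ∀ z, g z = g 0 * Complex.exp (ψ z) := by
    intro z
    have h1 := hconst z
    simp only [hh, hψ0, neg_zero, Complex.exp_zero, mul_one] at h1
    have h2 : g z * Complex.exp (-ψ z) * Complex.exp (ψ z) = g 0 * Complex.exp (ψ z) := by
      rw [h1]
    rwa [mul_assoc, ← Complex.exp_add, neg_add_cancel, Complex.exp_zero, mul_one] at h2
  -- suppose g 0 ≠ 0, derive contradiction
  intro z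
  by_contra hgz_ne
  have hg0 : g 0 ≠ 0 := by
    intro h0
    exact hgz_ne (by rw [hgz z, h0, zero_mul])
  have hexp1 : Complex.exp (ψ 1) = 1 := by
    have h1 := hper1 0
    rw [zero_add, hgz 1, hgz 0, hψ0, Complex.exp_zero, mul_one] at h1
    exact mul_left_cancel₀ hg0 (by rw [h1, mul_one])
  have hexpτ : Complex.exp (ψ τ) = 1 := by
    have h1 := hperτ 0
    rw [zero_add, hgz τ, hgz 0, hψ0, Complex.exp_zero, mul_one] at h1
    exact mul_left_cancel₀ hg0 (by rw [h1, mul_one])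
  obtain ⟨n, hn⟩ := Complex.exp_eq_one_iff.mp hexp1
  obtain ⟨m, hm⟩ := Complex.exp_eq_one_iff.mp hexpτ
  simp only [hψ, map_one, mul_one] at hn
  simp only [hψ] at hm
  rw [hc₁, hc₂] at hn hm
  have hsub : τ - (starRingEnd ℂ) τ = 2 * t * Complex.I := by
    rw [Complex.sub_conj]
    push_cast [ht_def]
    ring
  -- clear denominators
  have hn' : (Real.pi : ℂ) * ((starRingEnd ℂ) q - q) =
      (n : ℂ) * (2 * Real.pi * Complex.I) * t := by
    have := congrArg (· * t) hn
    field_simp at this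
    linear_combination (Real.pi : ℂ) * this
  have hm' : (Real.pi : ℂ) * ((starRingEnd ℂ) q * τ - q * (starRingEnd ℂ τ)) =
      (m : ℂ) * (2 * Real.pi * Complex.I) * t := by
    have := congrArg (· * t) hm
    field_simp at this
    linear_combination (Real.pi : ℂ) * this
  have key2 : q * (2 * Real.pi * Complex.I * t) =
      ((m : ℂ) - n * τ) * (2 * Real.pi * Complex.I * t) := by
    linear_combination hm' - τ * hn' - Real.pi * q * hsub
  have hne : (2 * Real.pi * Complex.I * t : ℂ) ≠ 0 := by
    apply mul_ne_zero
    apply mul_ne_zero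
    · exact mul_ne_zero two_ne_zero hπ
    · exact Complex.I_ne_zero
    · exact ht
  have key : q = (m : ℂ) - (n : ℂ) * τ := mul_right_cancel₀ hne key2
  exact hq m (-n) (by push_cast; linear_combination key)
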